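/- arXiv:2412.14896 — 3 statements merged into one kernel-verified Lean document; each statement's English description precedes it below -/
import Mathlib

section
/- Let μ be a non-zero, finite, compactly supported Borel measure on ℝ^d. Suppose there exist q > 1 and a constant C ≥ 0 such that ‖(fμ)^‖_{L^q(ℝ^d)} ≤ C ‖f‖_{L²(μ)} for all f ∈ L²(μ). Then μ̂(ξ) → 0 as |ξ| → ∞. -/
open MeasureTheory ENNReal

noncomputable def mFT {d : ℕ} (μ : Measure (EuclideanSpace ℝ (Fin d)))
    (ξ : EuclideanSpace ℝ (Fin d)) : ℂ :=
  ∫ x, Complex.exp (-2 * Real.pi * Complex.I * ((inner ℝ ξ x : ℝ) : ℂ)) ∂μ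

noncomputable def fmFT {d : ℕ} (f : EuclideanSpace ℝ (Fin d) → ℂ)
    (μ : Measure (EuclideanSpace ℝ (Fin d))) (ξ : EuclideanSpace ℝ (Fin d)) : ℂ :=
  ∫ x, Complex.exp (-2 * Real.pi * Complex.I * ((inner ℝ ξ x : ℝ) : ℂ)) * f x ∂μ

lemma exp_mul_I_sub_one_norm_le (θ : ℝ) :
    ‖Complex.exp (θ * Complex.I) - 1‖ ≤ |θ| := by
  have key : Complex.exp ((θ:ℂ) * Complex.I) - 1
      = Complex.exp ((θ/2 : ℝ) * Complex.I) * (2 * Complex.sin ((θ/2 : ℝ)) * Complex.I) := by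
    rw [Complex.sin]
    have e1 : Complex.exp ((θ/2:ℝ) * Complex.I) * Complex.exp ((θ/2:ℝ) * Complex.I)
        = Complex.exp ((θ:ℂ) * Complex.I) := by
      rw [← Complex.exp_add]; push_cast; ring_nf
    have e2 : Complex.exp ((θ/2:ℝ) * Complex.I) * Complex.exp (-((θ/2:ℝ)) * Complex.I) = 1 := by
      rw [← Complex.exp_add]; norm_num
    have hI2 : (Complex.I)^2 = -1 := Complex.I_sq
    push_cast
    push_cast at e1 e2
    linear_combination -e1 + e2 + (Complex.exp ((θ:ℂ)/2*Complex.I)^2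
      - Complex.exp ((θ:ℂ)/2*Complex.I)*Complex.exp (-((θ:ℂ)/2)*Complex.I)) * hI2
  rw [key, ← Complex.ofReal_sin]
  simp only [norm_mul, Complex.norm_exp_ofReal_mul_I, Complex.norm_I, one_mul, mul_one,
    Complex.norm_real, Real.norm_eq_abs, Complex.norm_ofNat]
  calc 2 * |Real.sin (θ/2)| ≤ 2 * |θ/2| := by
        have := Real.abs_sin_le_abs (x := θ/2); linarith
    _ = |θ| := by rw [abs_div, (by norm_num : |(2:ℝ)| = 2)]; ring

/-- If an `L²(μ) → L^q` extension estimate holds for some `q > 1`, then `μ̂` decays at infinity. -/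
theorem fourier_decay_of_restriction
    (d : ℕ) (μ : Measure (EuclideanSpace ℝ (Fin d))) [IsFiniteMeasure μ] (hμ0 : μ ≠ 0)
    (hcs : ∃ K : Set (EuclideanSpace ℝ (Fin d)), IsCompact K ∧ μ Kᶜ = 0)
    (h : ∃ q : ℝ, 1 < q ∧ ∃ C : ℝ, 0 ≤ C ∧
      ∀ f : EuclideanSpace ℝ (Fin d) → ℂ, MemLp f 2 μ →
        eLpNorm (fmFT f μ) (ENNReal.ofReal q) volume ≤ ENNReal.ofReal C * eLpNorm f 2 μ) :
    Filter.Tendsto (mFT μ) (Filter.comap norm Filter.atTop) (nhds 0) := by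
  classical
  obtain ⟨K, hKc, hKμ⟩ := hcs
  obtain ⟨q, hq1, C, hC0, hC⟩ := h
  have hq0 : 0 < q := lt_trans one_pos hq1
  set g : EuclideanSpace ℝ (Fin d) → ℂ := mFT μ with hgdef
  obtain ⟨R0, hR0⟩ := hKc.isBounded.subset_closedBall 0
  set R : ℝ := max R0 0 with hRdef
  have hRnn : (0:ℝ) ≤ R := le_max_right _ _
  have hKR : K ⊆ Metric.closedBall 0 R :=
    hR0.trans (Metric.closedBall_subset_closedBall (le_max_left R0 0))
  have haeK : ∀ᵐ x ∂μ, x ∈ K := by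
    rw [MeasureTheory.ae_iff]
    simpa [← Set.compl_def] using hKμ
  set L : ℝ := 2 * Real.pi * R * (μ Set.univ).toReal with hLdef
  have hLnn : 0 ≤ L := by positivity
  set F : EuclideanSpace ℝ (Fin d) → EuclideanSpace ℝ (Fin d) → ℂ := fun ξ x =>
    Complex.exp (-2 * Real.pi * Complex.I * ((inner ℝ ξ x : ℝ) : ℂ)) with hFdef
  have hform : ∀ a : ℝ, (-2 * (Real.pi:ℂ) * Complex.I * (a:ℂ))
      = ((-2 * Real.pi * a : ℝ) : ℂ) * Complex.I := by
    intro a; push_cast; ring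
  have hFnorm : ∀ ξ x, ‖F ξ x‖ = 1 := by
    intro ξ x
    rw [hFdef]
    simp only []
    rw [hform]
    exact Complex.norm_exp_ofReal_mul_I _
  have hFcont : ∀ ξ, Continuous (F ξ) := by
    intro ξ
    exact Complex.continuous_exp.comp
      (continuous_const.mul (Complex.continuous_ofReal.comp
        (continuous_const.inner continuous_id)))
  have hFint : ∀ ξ, Integrable (F ξ) μ := by
    intro ξ
    refine (integrable_const (1:ℝ)).mono' ((hFcont ξ).aestronglyMeasurable) ?_
    filter_upwards with x
    simp [hFnorm]
  have hlip : ∀ ξ η, ‖g ξ - g η‖ ≤ L * ‖ξ - η‖ := by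
    intro ξ η
    have hsub : g ξ - g η = ∫ x, (F ξ x - F η x) ∂μ :=
      (integral_sub (hFint ξ) (hFint η)).symm
    rw [hsub]
    have hbd : ∀ᵐ x ∂μ, ‖F ξ x - F η x‖ ≤ 2 * Real.pi * R * ‖ξ - η‖ := by
      filter_upwards [haeK] with x hx
      have hxR : ‖x‖ ≤ R := by
        have := hKR hx
        rwa [Metric.mem_closedBall, dist_zero_right] at this
      have hdec : F ξ x - F η x = F η x *
          (Complex.exp (((-2*Real.pi*((inner ℝ ξ x : ℝ) - (inner ℝ η x : ℝ)) : ℝ) : ℂ)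
            * Complex.I) - 1) := by
        rw [mul_sub, mul_one, hFdef]
        simp only []
        rw [← Complex.exp_add]
        congr 1
        push_cast; ring
      rw [hdec, norm_mul, hFnorm, one_mul]
      calc ‖Complex.exp (((-2*Real.pi*((inner ℝ ξ x : ℝ) - (inner ℝ η x : ℝ)) : ℝ):ℂ)
              * Complex.I) - 1‖
          ≤ |(-2*Real.pi*((inner ℝ ξ x : ℝ) - (inner ℝ η x : ℝ)) : ℝ)| :=
            exp_mul_I_sub_one_norm_le _
        _ = 2 * Real.pi * |(inner ℝ ξ x : ℝ) - (inner ℝ η x : ℝ)| := by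
            rw [(by ring : (-2*Real.pi*((inner ℝ ξ x : ℝ) - (inner ℝ η x : ℝ)) : ℝ) = -(2*Real.pi*((inner ℝ ξ x : ℝ) - (inner ℝ η x : ℝ)))), abs_neg, abs_mul, abs_of_pos (by positivity : (0:ℝ) < 2*Real.pi)]
        _ = 2 * Real.pi * |(inner ℝ (ξ - η) x : ℝ)| := by rw [inner_sub_left]
        _ ≤ 2 * Real.pi * (‖ξ - η‖ * ‖x‖) := by
            have := abs_real_inner_le_norm (ξ - η) x
            have hπ : (0:ℝ) < Real.pi := Real.pi_pos
            nlinarith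
        _ ≤ 2 * Real.pi * R * ‖ξ - η‖ := by
            have hπ : (0:ℝ) < Real.pi := Real.pi_pos
            have h1 : ‖ξ - η‖ * ‖x‖ ≤ ‖ξ - η‖ * R :=
              mul_le_mul_of_nonneg_left hxR (norm_nonneg _)
            nlinarith
    calc ‖∫ x, (F ξ x - F η x) ∂μ‖ ≤ (2 * Real.pi * R * ‖ξ - η‖) * (μ Set.univ).toReal :=
          norm_integral_le_of_norm_le_const hbd
      _ = L * ‖ξ - η‖ := by rw [hLdef]; ring
  have hgc : Continuous g := by
    refine (LipschitzWith.of_dist_le_mul (K := ⟨L, hLnn⟩) (f := g) ?_).continuous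
    intro ξ η
    rw [dist_eq_norm, dist_eq_norm]
    exact hlip ξ η
  -- L^q finiteness
  have heq : fmFT (fun _ => (1:ℂ)) μ = g := by
    funext ξ; rw [hgdef]; unfold fmFT mFT; simp
  have hfin : eLpNorm g (ENNReal.ofReal q) volume < ⊤ := by
    have h1 := hC _ (memLp_const (1:ℂ))
    rw [heq] at h1
    exact lt_of_le_of_lt h1 (ENNReal.mul_lt_top ENNReal.ofReal_lt_top (memLp_const (1:ℂ)).2)
  have hT : (∫⁻ ξ, (‖g ξ‖₊ : ℝ≥0∞) ^ q ∂volume) < ⊤ := by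
    rw [eLpNorm_eq_lintegral_rpow_enorm_toReal (by simpa [ENNReal.ofReal_eq_zero] using hq0.not_ge)
      ENNReal.ofReal_ne_top, ENNReal.toReal_ofReal hq0.le] at hfin
    simp only [enorm_eq_nnnorm] at hfin
    by_contra hc
    rw [not_lt, top_le_iff] at hc
    rw [hc, ENNReal.top_rpow_of_pos (by positivity)] at hfin
    exact (lt_irrefl _) hfin
  -- main claim
  have claim : ∀ ε : ℝ, 0 < ε → ∃ A : ℝ, ∀ x : EuclideanSpace ℝ (Fin d), A ≤ ‖x‖ → ‖g x‖ < ε := by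
    by_contra hcon
    push_neg at hcon
    obtain ⟨ε, hε, hyp⟩ := hcon
    choose x hx1 hx2 using hyp
    set δ : ℝ := ε / (2 * (L + 1)) with hδdef
    have hδpos : 0 < δ := by positivity
    set ξ : ℕ → EuclideanSpace ℝ (Fin d) := fun n => Nat.rec (x 0) (fun _ p => x (‖p‖ + 2*δ)) n with hξdef
    have hstep : ∀ n, ‖ξ n‖ + 2*δ ≤ ‖ξ (n+1)‖ := fun n => hx1 _
    have hbig : ∀ n, ε ≤ ‖g (ξ n)‖ := by
      intro n; cases n with
      | zero => exact hx2 _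
      | succ k => exact hx2 _
    have hgap : ∀ m n : ℕ, m < n → ‖ξ m‖ + 2*δ ≤ ‖ξ n‖ := by
      intro m n hmn
      induction n with
      | zero => omega
      | succ k ih =>
        rcases Nat.lt_succ_iff_lt_or_eq.mp hmn with hcase | hcase
        · have h1 := ih hcase
          have h2 := hstep k
          linarith
        · subst hcase; exact hstep m
    have hdisj : Pairwise (Function.onFun Disjoint (fun n => Metric.ball (ξ n) δ)) := by
      have key : ∀ a b : ℕ, a < b → Disjoint (Metric.ball (ξ a) δ) (Metric.ball (ξ b) δ) := by
        intro a b hab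
        apply Metric.ball_disjoint_ball
        have h1 := hgap a b hab
        have h2 : ‖ξ b‖ - ‖ξ a‖ ≤ dist (ξ a) (ξ b) := by
          rw [dist_comm, dist_eq_norm]
          exact le_trans (le_abs_self _) (abs_norm_sub_norm_le _ _)
        linarith
      intro m n hmn
      rcases lt_or_gt_of_ne hmn with hlt | hlt
      · exact key _ _ hlt
      · exact (key _ _ hlt).symm
    have hlow : ∀ n, ∀ y ∈ Metric.ball (ξ n) δ, ε/2 ≤ ‖g y‖ := by
      intro n y hy
      have h2 : ‖y - ξ n‖ < δ := by
        rw [← dist_eq_norm]; exact Metric.mem_ball.mp hy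
      have h3 : ‖g y - g (ξ n)‖ ≤ ε/2 := by
        have hLδ : L * δ ≤ ε/2 := by
          rw [hδdef, mul_div_assoc']
          rw [div_le_div_iff₀ (by positivity) (by norm_num)]
          nlinarith
        calc ‖g y - g (ξ n)‖ ≤ L * ‖y - ξ n‖ := hlip y (ξ n)
          _ ≤ L * δ := mul_le_mul_of_nonneg_left h2.le hLnn
          _ ≤ ε/2 := hLδ
      have h4 := hbig n
      have h5 : ‖g (ξ n)‖ - ‖g y‖ ≤ ‖g y - g (ξ n)‖ := by
        rw [norm_sub_rev]
        exact le_trans (le_abs_self _) (abs_norm_sub_norm_le _ _)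
      linarith
    set c : ℝ≥0∞ := ENNReal.ofReal ((ε/2)^q) with hcdef
    have hc0 : c ≠ 0 := by
      rw [hcdef, Ne, ENNReal.ofReal_eq_zero, not_le]
      exact Real.rpow_pos_of_pos (by positivity) q
    have hmeas : Measurable fun y : EuclideanSpace ℝ (Fin d) => (‖g y‖₊ : ℝ≥0∞) ^ q :=
      (hgc.measurable.nnnorm.coe_nnreal_ennreal).pow_const q
    have hball : ∀ n, c * volume (Metric.ball (ξ n) δ)
        ≤ ∫⁻ y in Metric.ball (ξ n) δ, (‖g y‖₊:ℝ≥0∞)^q ∂volume := by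
      intro n
      rw [← setLIntegral_const]
      refine setLIntegral_mono hmeas ?_
      intro y hy
      have h1 := hlow n y hy
      calc c ≤ ENNReal.ofReal (‖g y‖ ^ q) := by
            rw [hcdef]
            exact ENNReal.ofReal_le_ofReal (Real.rpow_le_rpow (by positivity) h1 hq0.le)
        _ = (‖g y‖₊ : ℝ≥0∞) ^ q := by
            rw [← enorm_eq_nnnorm, ← ofReal_norm, ← ENNReal.ofReal_rpow_of_nonneg (norm_nonneg _) hq0.le]
    have hsum : (⊤ : ℝ≥0∞) ≤ ∫⁻ y, (‖g y‖₊:ℝ≥0∞)^q ∂volume := by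
      have hv : ∀ n : ℕ, volume (Metric.ball (ξ n) δ) = volume (Metric.ball (0:EuclideanSpace ℝ (Fin d)) δ) :=
        fun n => Measure.addHaar_ball_center volume (ξ n) δ
      have h5 : (∑' _ : ℕ, c * volume (Metric.ball (0:EuclideanSpace ℝ (Fin d)) δ)) = ⊤ :=
        ENNReal.tsum_const_eq_top_of_ne_zero
          (mul_ne_zero hc0 (Metric.measure_ball_pos volume 0 hδpos).ne')
      calc (⊤:ℝ≥0∞) = ∑' _ : ℕ, c * volume (Metric.ball (0:EuclideanSpace ℝ (Fin d)) δ) := h5.symm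
        _ = ∑' n : ℕ, c * volume (Metric.ball (ξ n) δ) := by
            congr 1; funext n; rw [hv n]
        _ ≤ ∑' n : ℕ, ∫⁻ y in Metric.ball (ξ n) δ, (‖g y‖₊:ℝ≥0∞)^q ∂volume :=
            ENNReal.tsum_le_tsum hball
        _ = ∫⁻ y in ⋃ n, Metric.ball (ξ n) δ, (‖g y‖₊:ℝ≥0∞)^q ∂volume :=
            (lintegral_iUnion (fun n => measurableSet_ball) hdisj _).symm
        _ ≤ ∫⁻ y, (‖g y‖₊:ℝ≥0∞)^q ∂volume := setLIntegral_le_lintegral _ _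
    exact absurd hT (by rw [top_le_iff] at hsum; rw [hsum]; exact lt_irrefl _)
  -- conclude
  rw [Metric.tendsto_nhds]
  intro ε hε
  obtain ⟨A, hA⟩ := claim ε hε
  rw [Filter.eventually_comap]
  filter_upwards [Filter.eventually_ge_atTop A] with b hb a hab
  rw [dist_zero_right]
  exact hA a (by rw [hab]; exact hb)
end

section
/- Let d ≥ 1 be an integer, let μ be a non-zero, finite, compactly supported Borel measure on ℝ^d, and let 0 < s < d be such that ∫_{|ξ|≥1} |μ̂(ξ)|² |ξ|^{s−d} dξ = ∞. Then for every q with 2 ≤ q < 2d/s one has ∫_{|ξ|≥1} |μ̂(ξ)|^q dξ = ∞; in particular μ̂ ∉ L^q(ℝ^d) for all such q. -/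
open MeasureTheory ENNReal

/-- Finiteness of the integral of `‖ξ‖^(-t)` over `{‖ξ‖ ≥ 1}` for `t > d`. -/
lemma weight_fin (d : ℕ) (t : ℝ) (ht : (d:ℝ) < t) :
    (∫⁻ ξ in {ξ : EuclideanSpace ℝ (Fin d) | 1 ≤ ‖ξ‖},
      ENNReal.ofReal (‖ξ‖ ^ (-t))) < ⊤ := by
  have hfr : (Module.finrank ℝ (EuclideanSpace ℝ (Fin d)) : ℝ) < t := by
    simpa using ht
  have hfin := finite_integral_one_add_norm (E := EuclideanSpace ℝ (Fin d)) (μ := volume) hfr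
  have hmono : ∫⁻ ξ in {ξ : EuclideanSpace ℝ (Fin d) | 1 ≤ ‖ξ‖},
      ENNReal.ofReal (‖ξ‖ ^ (-t)) ≤
      ∫⁻ ξ : EuclideanSpace ℝ (Fin d), ENNReal.ofReal ((2:ℝ)^t * (1 + ‖ξ‖) ^ (-t)) := by
    refine le_trans (setLIntegral_mono' (measurableSet_le measurable_const measurable_norm) ?_)
      (setLIntegral_le_lintegral _ _)
    intro x hx
    simp only [Set.mem_setOf_eq] at hx
    apply ENNReal.ofReal_le_ofReal
    have h1 : (0:ℝ) < ‖x‖ := lt_of_lt_of_le one_pos hx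
    have h2 : 1 + ‖x‖ ≤ 2 * ‖x‖ := by linarith
    have h3 : (1 + ‖x‖) ^ (-t) ≥ (2 * ‖x‖) ^ (-t) := by
      apply Real.rpow_le_rpow_of_nonpos (by positivity) h2 (by linarith)
    calc ‖x‖ ^ (-t) = (2:ℝ)^t * ((2:ℝ)^(-t) * ‖x‖ ^ (-t)) := by
          rw [← mul_assoc, ← Real.rpow_add (by norm_num)]; simp
      _ = (2:ℝ)^t * (2 * ‖x‖) ^ (-t) := by
          rw [Real.mul_rpow (by norm_num) h1.le]
      _ ≤ (2:ℝ)^t * (1 + ‖x‖) ^ (-t) := by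
          exact mul_le_mul_of_nonneg_left h3 (by positivity)
  calc _ ≤ _ := hmono
    _ = ENNReal.ofReal ((2:ℝ)^t) * ∫⁻ ξ : EuclideanSpace ℝ (Fin d),
          ENNReal.ofReal ((1 + ‖ξ‖) ^ (-t)) := by
        rw [← lintegral_const_mul']
        · congr 1; ext ξ
          rw [← ENNReal.ofReal_mul (by positivity)]
        · exact ofReal_ne_top
    _ < ⊤ := ENNReal.mul_lt_top ofReal_lt_top hfin

/-- Hambrook–Łaba observation: if the weighted `L²` integral of `μ̂` diverges,
then `μ̂ ∉ L^q` for `2 ≤ q < 2d/s`. -/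
theorem hambrook_laba
    (d : ℕ) (hd : 1 ≤ d)
    (μ : Measure (EuclideanSpace ℝ (Fin d))) [IsFiniteMeasure μ] (hμ0 : μ ≠ 0)
    (hcs : ∃ K : Set (EuclideanSpace ℝ (Fin d)), IsCompact K ∧ μ Kᶜ = 0)
    (s : ℝ) (hs0 : 0 < s) (hsd : s < d)
    (h : (∫⁻ ξ in {ξ : EuclideanSpace ℝ (Fin d) | 1 ≤ ‖ξ‖},
        ENNReal.ofReal (‖mFT μ ξ‖ ^ 2 * ‖ξ‖ ^ (s - (d:ℝ)))) = ⊤) :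
    ∀ q : ℝ, 2 ≤ q → q < 2 * d / s →
      (∫⁻ ξ in {ξ : EuclideanSpace ℝ (Fin d) | 1 ≤ ‖ξ‖},
        ENNReal.ofReal (‖mFT μ ξ‖ ^ q)) = ⊤ ∧
      ¬ MemLp (mFT μ) (ENNReal.ofReal q) volume := by
  intro q hq2 hqlt
  set S : Set (EuclideanSpace ℝ (Fin d)) := {ξ | 1 ≤ ‖ξ‖} with hSdef
  have hS : MeasurableSet S := measurableSet_le measurable_const measurable_norm
  have hq0 : (0:ℝ) < q := lt_of_lt_of_le two_pos hq2
  have key : (∫⁻ ξ in S, ENNReal.ofReal (‖mFT μ ξ‖ ^ q)) = ⊤ := by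
    rcases eq_or_lt_of_le hq2 with hq2e | hq2l
    · -- q = 2
      refine eq_top_iff.mpr ?_
      rw [← h]
      refine setLIntegral_mono' hS ?_
      intro ξ hξ
      apply ENNReal.ofReal_le_ofReal
      have h1 : (1:ℝ) ≤ ‖ξ‖ := hξ
      have hw : ‖ξ‖ ^ (s - (d:ℝ)) ≤ 1 :=
        Real.rpow_le_one_of_one_le_of_nonpos h1 (by linarith)
      calc ‖mFT μ ξ‖ ^ 2 * ‖ξ‖ ^ (s - (d:ℝ)) ≤ ‖mFT μ ξ‖ ^ 2 * 1 := by
            exact mul_le_mul_of_nonneg_left hw (by positivity)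
        _ = ‖mFT μ ξ‖ ^ q := by
            rw [mul_one, ← hq2e, ← Real.rpow_natCast (‖mFT μ ξ‖) 2]
            norm_num
    · -- 2 < q
      set p' : ℝ := q / (q - 2) with hp'def
      have hq2' : (0:ℝ) < q - 2 := by linarith
      have hpq : (q/2).HolderConjugate p' := by
        rw [Real.holderConjugate_iff]; constructor
        · rw [lt_div_iff₀ (by norm_num : (0:ℝ) < 2)]; linarith
        · rw [hp'def, inv_div, inv_div, ← add_div,
            show (2:ℝ)+(q-2) = q by ring, div_self hq0.ne']
      have hqs : q * s < 2 * d := by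
        have := (lt_div_iff₀ hs0).mp hqlt
        linarith
      have ht : (d:ℝ) < (d - s) * p' := by
        have h1 : (d:ℝ) * (q-2) < (d-s) * q := by nlinarith
        calc (d:ℝ) = ((d:ℝ) * (q-2)) / (q-2) := by field_simp
          _ < ((d-s) * q) / (q-2) := by
              gcongr
          _ = (d-s) * p' := by rw [hp'def, mul_div_assoc]
      have hWfin := weight_fin d ((d - s) * p') ht
      have hpt : ∀ ξ ∈ S, ENNReal.ofReal (‖mFT μ ξ‖ ^ 2 * ‖ξ‖ ^ (s - (d:ℝ))) ≤
          ENNReal.ofReal (‖mFT μ ξ‖ ^ q) + ENNReal.ofReal (‖ξ‖ ^ (-((d - s) * p'))) := by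
        intro ξ _
        have hng : (0:ℝ) ≤ ‖mFT μ ξ‖ := norm_nonneg _
        have hy := Real.young_inequality_of_nonneg (a := ‖mFT μ ξ‖^2)
          (b := ‖ξ‖ ^ (s - (d:ℝ))) (by positivity) (by positivity) hpq
        have e1 : ((‖mFT μ ξ‖^2 : ℝ)) ^ (q/2) = ‖mFT μ ξ‖ ^ q := by
          rw [← Real.rpow_natCast (‖mFT μ ξ‖) 2, ← Real.rpow_mul hng]
          norm_num
          congr 1
          ring
        have e2 : (‖ξ‖ ^ (s - (d:ℝ))) ^ p' = ‖ξ‖ ^ (-((d - s) * p')) := by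
          rw [← Real.rpow_mul (norm_nonneg _)]
          ring_nf
        have hstep : ‖mFT μ ξ‖ ^ 2 * ‖ξ‖ ^ (s - (d:ℝ)) ≤
            ‖mFT μ ξ‖ ^ q + ‖ξ‖ ^ (-((d - s) * p')) := by
          refine le_trans hy ?_
          rw [e1, e2]
          have d1 : ‖mFT μ ξ‖ ^ q / (q/2) ≤ ‖mFT μ ξ‖ ^ q :=
            div_le_self (by positivity) hpq.lt.le
          have d2 : ‖ξ‖ ^ (-((d - s) * p')) / p' ≤ ‖ξ‖ ^ (-((d - s) * p')) :=
            div_le_self (by positivity) hpq.symm.lt.le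
          linarith
        calc ENNReal.ofReal (‖mFT μ ξ‖ ^ 2 * ‖ξ‖ ^ (s - (d:ℝ)))
            ≤ ENNReal.ofReal (‖mFT μ ξ‖ ^ q + ‖ξ‖ ^ (-((d - s) * p'))) :=
              ENNReal.ofReal_le_ofReal hstep
          _ ≤ _ := ENNReal.ofReal_add_le
      have hWmeas : Measurable fun ξ : EuclideanSpace ℝ (Fin d) =>
          ENNReal.ofReal (‖ξ‖ ^ (-((d - s) * p'))) :=
        by fun_prop
      have hle : (⊤:ℝ≥0∞) ≤ (∫⁻ ξ in S, ENNReal.ofReal (‖mFT μ ξ‖ ^ q)) +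
          ∫⁻ ξ in S, ENNReal.ofReal (‖ξ‖ ^ (-((d - s) * p'))) := by
        rw [← lintegral_add_right _ hWmeas, ← h]
        exact setLIntegral_mono' hS hpt
      by_contra hA
      have hAlt : (∫⁻ ξ in S, ENNReal.ofReal (‖mFT μ ξ‖ ^ q)) < ⊤ :=
        lt_top_iff_ne_top.mpr hA
      exact lt_irrefl ⊤ (lt_of_le_of_lt hle (ENNReal.add_lt_top.mpr ⟨hAlt, hWfin⟩))
  refine ⟨key, ?_⟩
  intro hm
  have hne0 : ENNReal.ofReal q ≠ 0 := (ENNReal.ofReal_pos.mpr hq0).ne'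
  have hnetop : ENNReal.ofReal q ≠ ⊤ := ofReal_ne_top
  have hsn := hm.2
  rw [eLpNorm_eq_lintegral_rpow_enorm_toReal hne0 hnetop, ENNReal.toReal_ofReal hq0.le] at hsn
  have htot : (∫⁻ ξ, ‖mFT μ ξ‖ₑ ^ q) = ⊤ := by
    refine eq_top_iff.mpr ?_
    rw [← key]
    refine le_trans (le_of_eq (lintegral_congr fun ξ => ?_)) (setLIntegral_le_lintegral S _)
    rw [← ofReal_norm, ← ENNReal.ofReal_rpow_of_nonneg (norm_nonneg _) hq0.le]
  rw [htot] at hsn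
  have : ((⊤:ℝ≥0∞)) ^ (1/q) = ⊤ := ENNReal.top_rpow_of_pos (by positivity)
  rw [this] at hsn
  exact absurd hsn (lt_irrefl ⊤)
end

section
/- Let d ≥ 1 be an integer and let μ be a non-zero, finite, compactly supported Borel measure on ℝ^d such that ∫_{ℝ^d} |μ̂(ξ)|^{2/θ} dξ = ∞ for every θ ∈ (0,1] (i.e. J_{dθ,θ}(μ) = ∞ for all θ ∈ (0,1]). Then for every p ∈ [1,∞] and every q ∈ [1,∞) there is no constant C ≥ 0 such that ‖(fμ)^‖_{L^q(ℝ^d)} ≤ C ‖f‖_{L^p(μ)} holds for all f ∈ L^p(μ). -/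
open MeasureTheory ENNReal

/-- If `J_{dθ,θ}(μ) = ∞` for all `θ ∈ (0,1]`, then no `L^p(μ) → L^q` extension
estimate holds for any `p ∈ [1,∞]` and finite `q`. -/
theorem extension_fails_for_all_exponents
    (d : ℕ) (hd : 1 ≤ d)
    (μ : Measure (EuclideanSpace ℝ (Fin d))) [IsFiniteMeasure μ] (hμ0 : μ ≠ 0)
    (hcs : ∃ K : Set (EuclideanSpace ℝ (Fin d)), IsCompact K ∧ μ Kᶜ = 0)
    (hJ : ∀ θ : ℝ, 0 < θ → θ ≤ 1 →
      (∫⁻ ξ, ENNReal.ofReal (‖mFT μ ξ‖ ^ (2/θ))) = ⊤) :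
    ∀ p : ℝ≥0∞, 1 ≤ p → ∀ q : ℝ, 1 ≤ q → ∀ C : ℝ, 0 ≤ C →
      ¬ (∀ f : EuclideanSpace ℝ (Fin d) → ℂ, MemLp f p μ →
          eLpNorm (fmFT f μ) (ENNReal.ofReal q) volume ≤
            ENNReal.ofReal C * eLpNorm f p μ) := by
  intro p hp q hq C hC h
  set g := mFT μ with hg
  have hq0 : (0:ℝ) < q := lt_of_lt_of_le one_pos hq
  -- apply hypothesis to the constant function 1
  have hone : MemLp (fun _ : EuclideanSpace ℝ (Fin d) => (1:ℂ)) p μ := memLp_const 1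
  have heq : fmFT (fun _ => (1:ℂ)) μ = g := by
    funext ξ; simp [fmFT, mFT, hg]
  have hfin : eLpNorm g (ENNReal.ofReal q) volume < ⊤ := by
    have h1 := h _ hone
    rw [heq] at h1
    exact lt_of_le_of_lt h1
      (ENNReal.mul_lt_top ENNReal.ofReal_lt_top hone.eLpNorm_lt_top)
  -- the L^q lintegral of ‖g‖^q is finite
  have hqne : (ENNReal.ofReal q) ≠ 0 := by
    simp [ENNReal.ofReal_eq_zero, not_le, hq0]
  have htoReal : (ENNReal.ofReal q).toReal = q := ENNReal.toReal_ofReal hq0.le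
  have hqint : (∫⁻ ξ, ENNReal.ofReal (‖g ξ‖ ^ q)) < ⊤ := by
    rw [eLpNorm_eq_lintegral_rpow_enorm_toReal hqne ENNReal.ofReal_ne_top, htoReal] at hfin
    have := (ENNReal.rpow_lt_top_iff_of_pos (by positivity : (0:ℝ) < 1/q)).mp hfin
    refine lt_of_eq_of_lt ?_ this
    refine lintegral_congr fun ξ => ?_
    rw [← ENNReal.ofReal_rpow_of_nonneg (norm_nonneg _) hq0.le,
      ofReal_norm_eq_enorm]
  -- pointwise bound on g
  set M : ℝ := (μ Set.univ).toReal with hM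
  have hbound : ∀ ξ, ‖g ξ‖ ≤ M := by
    intro ξ
    calc ‖g ξ‖ ≤ ∫ x, ‖Complex.exp (-2 * Real.pi * Complex.I * ((inner ℝ ξ x : ℝ) : ℂ))‖ ∂μ :=
          norm_integral_le_integral_norm _
      _ = ∫ _, (1:ℝ) ∂μ := by
          refine integral_congr_ae (Filter.Eventually.of_forall fun x => ?_)
          simp [Complex.norm_exp]
      _ = M := by simp [hM, Measure.real]
  have hM0 : 0 ≤ M := ENNReal.toReal_nonneg
  -- choose r = max q 2 and θ = 2 / r
  set r : ℝ := max q 2 with hr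
  have hr2 : (2:ℝ) ≤ r := le_max_right _ _
  have hr0 : (0:ℝ) < r := lt_of_lt_of_le two_pos hr2
  have hqr : q ≤ r := le_max_left _ _
  have hθ := hJ (2 / r) (by positivity) (by
    rw [div_le_one hr0]; exact hr2)
  have h2r : 2 / (2 / r) = r := by field_simp
  rw [h2r] at hθ
  -- but the r-lintegral is finite, contradiction
  have hle : (∫⁻ ξ, ENNReal.ofReal (‖g ξ‖ ^ r)) ≤
      ENNReal.ofReal (M ^ (r - q)) * ∫⁻ ξ, ENNReal.ofReal (‖g ξ‖ ^ q) := by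
    rw [← lintegral_const_mul' _ _ ENNReal.ofReal_ne_top]
    refine lintegral_mono fun ξ => ?_
    rw [← ENNReal.ofReal_mul (by positivity)]
    refine ENNReal.ofReal_le_ofReal ?_
    have : ‖g ξ‖ ^ r = ‖g ξ‖ ^ (r - q) * ‖g ξ‖ ^ q := by
      rw [← Real.rpow_add_of_nonneg (norm_nonneg _) (by linarith) hq0.le]
      ring_nf
    rw [this]
    exact mul_le_mul_of_nonneg_right
      (Real.rpow_le_rpow (norm_nonneg _) (hbound ξ) (by linarith))
      (Real.rpow_nonneg (norm_nonneg _) q)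
  have : (∫⁻ ξ, ENNReal.ofReal (‖g ξ‖ ^ r)) < ⊤ :=
    lt_of_le_of_lt hle (ENNReal.mul_lt_top ENNReal.ofReal_lt_top hqint)
  rw [hθ] at this
  exact (lt_irrefl _ this)
end
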